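/- In the Case II setting, for every tracial state τ on Pol(O_F^+) and all μ,ν ∈ {1,…,r} with μ ≠ ν, one has τ(Tr(A_{μν}^*·A_{μν})) = 0. In particular, all entries of the off-diagonal blocks A_{μν} (μ ≠ ν) belong to the Kac ideal J_KAC(Pol(O_F^+)). -/

import Mathlib

open scoped ComplexOrder

/-- The defining relations of `Pol(O_F⁺)`: `U` is unitary and `U·F = F·conj(U)`
(equivalently `U = F·conj(U)·F⁻¹`). -/
def OrthRel {ι : Type} [Fintype ι] [DecidableEq ι] {A : Type} [Ring A] [Algebra ℂ A]
    [StarRing A] (F : Matrix ι ι ℂ) (u : Matrix ι ι A) : Prop :=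
  u * u.conjTranspose = 1 ∧ u.conjTranspose * u = 1 ∧
    u * F.map (algebraMap ℂ A) = F.map (algebraMap ℂ A) * u.map star

/-- A presentation of the universal unital complex *-algebra `Pol(O_F⁺)`:
a unital complex *-algebra carrying a matrix of generators `u` satisfying the
defining relations, universal among all such. -/
structure PolO {ι : Type} [Fintype ι] [DecidableEq ι] (F : Matrix ι ι ℂ) where
  carrier : Type
  [isRing : Ring carrier]
  [isAlgebra : Algebra ℂ carrier]
  [isStarRing : StarRing carrier]
  [isStarModule : StarModule ℂ carrier]
  u : Matrix ι ι carrier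
  rel : OrthRel F u
  universal : ∀ (B : Type) [Ring B] [Algebra ℂ B] [StarRing B] [StarModule ℂ B]
      (v : Matrix ι ι B), OrthRel F v →
      ∃! φ : carrier →⋆ₐ[ℂ] B, ∀ j k, φ (u j k) = v j k

attribute [instance] PolO.isRing PolO.isAlgebra PolO.isStarRing PolO.isStarModule

/-- The defining relations of `Pol(U_N⁺)`: both `U` and `conj(U)` are unitary. -/
def BiUnitary {ι : Type} [Fintype ι] [DecidableEq ι] {A : Type} [Ring A] [Algebra ℂ A]
    [StarRing A] (u : Matrix ι ι A) : Prop :=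
  u * u.conjTranspose = 1 ∧ u.conjTranspose * u = 1 ∧
    u.map star * (u.map star).conjTranspose = 1 ∧ (u.map star).conjTranspose * u.map star = 1

/-- A presentation of the universal unital complex *-algebra `Pol(U_N⁺)` (`N = #ι`). -/
structure PolU (ι : Type) [Fintype ι] [DecidableEq ι] where
  carrier : Type
  [isRing : Ring carrier]
  [isAlgebra : Algebra ℂ carrier]
  [isStarRing : StarRing carrier]
  [isStarModule : StarModule ℂ carrier]
  u : Matrix ι ι carrier
  rel : BiUnitary u
  universal : ∀ (B : Type) [Ring B] [Algebra ℂ B] [StarRing B] [StarModule ℂ B]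
      (v : Matrix ι ι B), BiUnitary v →
      ∃! φ : carrier →⋆ₐ[ℂ] B, ∀ j k, φ (u j k) = v j k

attribute [instance] PolU.isRing PolU.isAlgebra PolU.isStarRing PolU.isStarModule

/-- A unital complex *-algebra is RFD if finite-dimensional *-representations
separate its points. -/
def IsRFD (A : Type) [Ring A] [Algebra ℂ A] [StarRing A] : Prop :=
  ∀ a : A, a ≠ 0 → ∃ (n : ℕ) (π : A →⋆ₐ[ℂ] Matrix (Fin n) (Fin n) ℂ), π a ≠ 0

/-- A tracial state on a unital complex *-algebra. -/
structure TracialState (A : Type) [Ring A] [Algebra ℂ A] [StarRing A] where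
  toFun : A →ₗ[ℂ] ℂ
  map_one' : toFun 1 = 1
  nonneg' : ∀ a : A, 0 ≤ toFun (star a * a)
  tracial' : ∀ a b : A, toFun (a * b) = toFun (b * a)

/-- The Kac ideal: elements killed by `τ(a^* a)` for every tracial state `τ`. -/
def kacIdeal (A : Type) [Ring A] [Algebra ℂ A] [StarRing A] : Set A :=
  {a : A | ∀ τ : TracialState A, τ.toFun (star a * a) = 0}

/-- The RFD ideal: the intersection of the kernels of all finite-dimensional
*-representations. -/
def rfdIdeal (A : Type) [Ring A] [Algebra ℂ A] [StarRing A] : Set A :=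
  {a : A | ∀ (n : ℕ) (π : A →⋆ₐ[ℂ] Matrix (Fin n) (Fin n) ℂ), π a = 0}

/-- A subset of a *-ring which is a two-sided ideal closed under the star operation. -/
def IsStarIdeal {A : Type} [Ring A] [StarRing A] (T : Set A) : Prop :=
  (0 : A) ∈ T ∧ (∀ a b, a ∈ T → b ∈ T → a + b ∈ T) ∧
    (∀ x a, a ∈ T → x * a ∈ T ∧ a * x ∈ T) ∧ (∀ a, a ∈ T → star a ∈ T)

/-- The two-sided *-ideal generated by a set. -/
def starIdealSpan {A : Type} [Ring A] [StarRing A] (S : Set A) : Set A :=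
  ⋂₀ {T : Set A | IsStarIdeal T ∧ S ⊆ T}

/-- The index set in the Case II setting: for each `ν = 1,…,r` a block `P_ν ⊕ Q_ν`
of size `2M_ν`. -/
abbrev CaseIIIdx (r : ℕ) (M : Fin r → ℕ) : Type := Σ ν : Fin r, (Fin (M ν) ⊕ Fin (M ν))

/-- The Case II matrix `F`: block-diagonal with blocks
`[[0, q_ν·I_{M_ν}], [−q_ν⁻¹·I_{M_ν}, 0]]` for `ν = 1,…,r`. -/
noncomputable def FCaseII (r : ℕ) (q : Fin r → ℝ) (M : Fin r → ℕ) :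
    Matrix (CaseIIIdx r M) (CaseIIIdx r M) ℂ := fun a b =>
  match a, b with
  | ⟨ν, .inl j⟩, ⟨μ, .inr k⟩ =>
      if ν = μ ∧ (j : ℕ) = (k : ℕ) then ((q ν : ℝ) : ℂ) else 0
  | ⟨ν, .inr j⟩, ⟨μ, .inl k⟩ =>
      if ν = μ ∧ (j : ℕ) = (k : ℕ) then ((-(q ν)⁻¹ : ℝ) : ℂ) else 0
  | _, _ => 0

set_option maxHeartbeats 1000000

section Aux
variable {r : ℕ} {q : Fin r → ℝ} {M : Fin r → ℕ}
variable {A : Type} [Ring A] [Algebra ℂ A] [StarRing A]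

lemma caseII_mulF_inl (u : Matrix (CaseIIIdx r M) (CaseIIIdx r M) A)
    (a : CaseIIIdx r M) (ν : Fin r) (k : Fin (M ν)) :
    (u * (FCaseII r q M).map (algebraMap ℂ A)) a ⟨ν, Sum.inl k⟩
      = u a ⟨ν, Sum.inr k⟩ * algebraMap ℂ A ((-(q ν)⁻¹ : ℝ) : ℂ) := by
  rw [Matrix.mul_apply,
    Finset.sum_eq_single_of_mem (⟨ν, Sum.inr k⟩ : CaseIIIdx r M) (Finset.mem_univ _)]
  · congr 1
    show algebraMap ℂ A (if ν = ν ∧ (k : ℕ) = (k : ℕ) then ((-(q ν)⁻¹ : ℝ) : ℂ) else 0) = _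
    rw [if_pos ⟨rfl, rfl⟩]
  · rintro ⟨μ', (j' | j')⟩ - hne
    · show u _ _ * algebraMap ℂ A (0 : ℂ) = 0
      rw [map_zero, mul_zero]
    · have h0 : FCaseII r q M ⟨μ', Sum.inr j'⟩ ⟨ν, Sum.inl k⟩ = 0 := by
        show (if μ' = ν ∧ (j' : ℕ) = (k : ℕ) then _ else 0) = 0
        rw [if_neg]; rintro ⟨h1, h2⟩; subst h1; cases Fin.ext h2; exact hne rfl
      show u _ _ * algebraMap ℂ A (FCaseII r q M ⟨μ', Sum.inr j'⟩ ⟨ν, Sum.inl k⟩) = 0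
      rw [h0, map_zero, mul_zero]

lemma caseII_mulF_inr (u : Matrix (CaseIIIdx r M) (CaseIIIdx r M) A)
    (a : CaseIIIdx r M) (ν : Fin r) (k : Fin (M ν)) :
    (u * (FCaseII r q M).map (algebraMap ℂ A)) a ⟨ν, Sum.inr k⟩
      = u a ⟨ν, Sum.inl k⟩ * algebraMap ℂ A ((q ν : ℝ) : ℂ) := by
  rw [Matrix.mul_apply,
    Finset.sum_eq_single_of_mem (⟨ν, Sum.inl k⟩ : CaseIIIdx r M) (Finset.mem_univ _)]
  · congr 1
    show algebraMap ℂ A (if ν = ν ∧ (k : ℕ) = (k : ℕ) then ((q ν : ℝ) : ℂ) else 0) = _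
    rw [if_pos ⟨rfl, rfl⟩]
  · rintro ⟨μ', (j' | j')⟩ - hne
    · have h0 : FCaseII r q M ⟨μ', Sum.inl j'⟩ ⟨ν, Sum.inr k⟩ = 0 := by
        show (if μ' = ν ∧ (j' : ℕ) = (k : ℕ) then _ else 0) = 0
        rw [if_neg]; rintro ⟨h1, h2⟩; subst h1; cases Fin.ext h2; exact hne rfl
      show u _ _ * algebraMap ℂ A (FCaseII r q M ⟨μ', Sum.inl j'⟩ ⟨ν, Sum.inr k⟩) = 0
      rw [h0, map_zero, mul_zero]
    · show u _ _ * algebraMap ℂ A (0 : ℂ) = 0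
      rw [map_zero, mul_zero]

lemma caseII_Fmul_inl (v : Matrix (CaseIIIdx r M) (CaseIIIdx r M) A)
    (μ : Fin r) (j : Fin (M μ)) (b : CaseIIIdx r M) :
    ((FCaseII r q M).map (algebraMap ℂ A) * v) ⟨μ, Sum.inl j⟩ b
      = algebraMap ℂ A ((q μ : ℝ) : ℂ) * v ⟨μ, Sum.inr j⟩ b := by
  rw [Matrix.mul_apply,
    Finset.sum_eq_single_of_mem (⟨μ, Sum.inr j⟩ : CaseIIIdx r M) (Finset.mem_univ _)]
  · congr 1
    show algebraMap ℂ A (if μ = μ ∧ (j : ℕ) = (j : ℕ) then ((q μ : ℝ) : ℂ) else 0) = _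
    rw [if_pos ⟨rfl, rfl⟩]
  · rintro ⟨ν', (k' | k')⟩ - hne
    · show algebraMap ℂ A (0 : ℂ) * v _ _ = 0
      rw [map_zero, zero_mul]
    · have h0 : FCaseII r q M ⟨μ, Sum.inl j⟩ ⟨ν', Sum.inr k'⟩ = 0 := by
        show (if μ = ν' ∧ (j : ℕ) = (k' : ℕ) then _ else 0) = 0
        rw [if_neg]; rintro ⟨h1, h2⟩; subst h1; cases Fin.ext h2; exact hne rfl
      show algebraMap ℂ A (FCaseII r q M ⟨μ, Sum.inl j⟩ ⟨ν', Sum.inr k'⟩) * v _ _ = 0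
      rw [h0, map_zero, zero_mul]

lemma caseII_Fmul_inr (v : Matrix (CaseIIIdx r M) (CaseIIIdx r M) A)
    (μ : Fin r) (j : Fin (M μ)) (b : CaseIIIdx r M) :
    ((FCaseII r q M).map (algebraMap ℂ A) * v) ⟨μ, Sum.inr j⟩ b
      = algebraMap ℂ A ((-(q μ)⁻¹ : ℝ) : ℂ) * v ⟨μ, Sum.inl j⟩ b := by
  rw [Matrix.mul_apply,
    Finset.sum_eq_single_of_mem (⟨μ, Sum.inl j⟩ : CaseIIIdx r M) (Finset.mem_univ _)]
  · congr 1
    show algebraMap ℂ A (if μ = μ ∧ (j : ℕ) = (j : ℕ) then ((-(q μ)⁻¹ : ℝ) : ℂ) else 0) = _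
    rw [if_pos ⟨rfl, rfl⟩]
  · rintro ⟨ν', (k' | k')⟩ - hne
    · have h0 : FCaseII r q M ⟨μ, Sum.inr j⟩ ⟨ν', Sum.inl k'⟩ = 0 := by
        show (if μ = ν' ∧ (j : ℕ) = (k' : ℕ) then _ else 0) = 0
        rw [if_neg]; rintro ⟨h1, h2⟩; subst h1; cases Fin.ext h2; exact hne rfl
      show algebraMap ℂ A (FCaseII r q M ⟨μ, Sum.inr j⟩ ⟨ν', Sum.inl k'⟩) * v _ _ = 0
      rw [h0, map_zero, zero_mul]
    · show algebraMap ℂ A (0 : ℂ) * v _ _ = 0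
      rw [map_zero, zero_mul]

lemma caseII_sum_idx (g : CaseIIIdx r M → ℂ) :
    ∑ x, g x = ∑ ν, ((∑ j, g ⟨ν, Sum.inl j⟩) + ∑ j, g ⟨ν, Sum.inr j⟩) := by
  rw [← Finset.univ_sigma_univ, Finset.sum_sigma]
  exact Finset.sum_congr rfl fun ν _ => Fintype.sum_sum_type _

end Aux


section TS
variable {A : Type} [Ring A] [Algebra ℂ A] [StarRing A] [StarModule ℂ A]

lemma tau_star_sq (τ : TracialState A) (x y : A) (c : ℝ) (h : star x = (c : ℂ) • y) :
    τ.toFun (star x * x) = ((c : ℂ))^2 * τ.toFun (star y * y) := by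
  have hx : x = (c : ℂ) • star y := by
    calc x = star (star x) := (star_star x).symm
    _ = star ((c : ℂ) • y) := by rw [h]
    _ = (starRingEnd ℂ) (c : ℂ) • star y := by rw [star_smul]; rfl
    _ = (c : ℂ) • star y := by rw [Complex.conj_ofReal]
  rw [h, hx, smul_mul_smul_comm, map_smul, τ.tracial' y (star y), smul_eq_mul, sq]

end TS

section Main
variable {r : ℕ} {q : Fin r → ℝ} {M : Fin r → ℕ}
variable {A : Type} [Ring A] [Algebra ℂ A] [StarRing A] [StarModule ℂ A]


/-- entry-level trace value -/
noncomputable def phiF (u : Matrix (CaseIIIdx r M) (CaseIIIdx r M) A)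
    (τ : TracialState A) (a b : CaseIIIdx r M) : ℂ :=
  τ.toFun (star (u a b) * u a b)


noncomputable def aaF (u : Matrix (CaseIIIdx r M) (CaseIIIdx r M) A)
    (τ : TracialState A) (μ ν : Fin r) : ℂ :=
  ∑ j : Fin (M μ), ∑ k : Fin (M ν), phiF u τ ⟨μ, Sum.inl j⟩ ⟨ν, Sum.inl k⟩


noncomputable def bbF (u : Matrix (CaseIIIdx r M) (CaseIIIdx r M) A)
    (τ : TracialState A) (μ ν : Fin r) : ℂ :=
  ∑ j : Fin (M μ), ∑ k : Fin (M ν), phiF u τ ⟨μ, Sum.inl j⟩ ⟨ν, Sum.inr k⟩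


noncomputable def ccF (u : Matrix (CaseIIIdx r M) (CaseIIIdx r M) A)
    (τ : TracialState A) (μ ν : Fin r) : ℂ :=
  ∑ j : Fin (M μ), ∑ k : Fin (M ν), phiF u τ ⟨μ, Sum.inr j⟩ ⟨ν, Sum.inl k⟩


noncomputable def ddF (u : Matrix (CaseIIIdx r M) (CaseIIIdx r M) A)
    (τ : TracialState A) (μ ν : Fin r) : ℂ :=
  ∑ j : Fin (M μ), ∑ k : Fin (M ν), phiF u τ ⟨μ, Sum.inr j⟩ ⟨ν, Sum.inr k⟩

variable (u : Matrix (CaseIIIdx r M) (CaseIIIdx r M) A) (τ : TracialState A)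

lemma phiF_nonneg (a b : CaseIIIdx r M) : 0 ≤ phiF u τ a b := τ.nonneg' _

lemma aaF_nonneg (μ ν : Fin r) : 0 ≤ aaF u τ μ ν :=
  Finset.sum_nonneg fun _ _ => Finset.sum_nonneg fun _ _ => phiF_nonneg u τ _ _

lemma ccF_nonneg (μ ν : Fin r) : 0 ≤ ccF u τ μ ν :=
  Finset.sum_nonneg fun _ _ => Finset.sum_nonneg fun _ _ => phiF_nonneg u τ _ _

lemma rowEq (h1 : u * u.conjTranspose = 1) (a : CaseIIIdx r M) :
    ∑ b, phiF u τ a b = 1 := by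
  have h := congrFun (congrFun h1 a) a
  rw [Matrix.mul_apply, Matrix.one_apply_eq] at h
  have h' : ∑ b, u a b * star (u a b) = 1 := by
    simpa [Matrix.conjTranspose_apply] using h
  calc ∑ b, phiF u τ a b = ∑ b, τ.toFun (u a b * star (u a b)) :=
        Finset.sum_congr rfl fun b _ => (τ.tracial' _ _)
    _ = τ.toFun (∑ b, u a b * star (u a b)) := (map_sum _ _ _).symm
    _ = 1 := by rw [h', τ.map_one']

lemma colEq (h2 : u.conjTranspose * u = 1) (b : CaseIIIdx r M) :
    ∑ a, phiF u τ a b = 1 := by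
  have h := congrFun (congrFun h2 b) b
  rw [Matrix.mul_apply, Matrix.one_apply_eq] at h
  have h' : ∑ a, star (u a b) * u a b = 1 := by
    simpa [Matrix.conjTranspose_apply] using h
  calc ∑ a, phiF u τ a b = τ.toFun (∑ a, star (u a b) * u a b) := (map_sum _ _ _).symm
    _ = 1 := by rw [h', τ.map_one']

lemma row1 (h1 : u * u.conjTranspose = 1) (μ : Fin r) :
    ∑ ν, (aaF u τ μ ν + bbF u τ μ ν) = (M μ : ℂ) := by
  calc ∑ ν, (aaF u τ μ ν + bbF u τ μ ν)
      = ∑ ν, ∑ j : Fin (M μ), ((∑ k, phiF u τ ⟨μ, Sum.inl j⟩ ⟨ν, Sum.inl k⟩)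
          + ∑ k, phiF u τ ⟨μ, Sum.inl j⟩ ⟨ν, Sum.inr k⟩) := by
        simp only [aaF, bbF, Finset.sum_add_distrib]
    _ = ∑ j : Fin (M μ), ∑ ν, ((∑ k, phiF u τ ⟨μ, Sum.inl j⟩ ⟨ν, Sum.inl k⟩)
          + ∑ k, phiF u τ ⟨μ, Sum.inl j⟩ ⟨ν, Sum.inr k⟩) := Finset.sum_comm
    _ = ∑ j : Fin (M μ), ∑ b, phiF u τ ⟨μ, Sum.inl j⟩ b :=
        Finset.sum_congr rfl fun j _ => (caseII_sum_idx (phiF u τ ⟨μ, Sum.inl j⟩)).symm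
    _ = ∑ _j : Fin (M μ), (1 : ℂ) :=
        Finset.sum_congr rfl fun j _ => rowEq u τ h1 _
    _ = (M μ : ℂ) := by simp

lemma row2 (h1 : u * u.conjTranspose = 1) (μ : Fin r) :
    ∑ ν, (ccF u τ μ ν + ddF u τ μ ν) = (M μ : ℂ) := by
  calc ∑ ν, (ccF u τ μ ν + ddF u τ μ ν)
      = ∑ ν, ∑ j : Fin (M μ), ((∑ k, phiF u τ ⟨μ, Sum.inr j⟩ ⟨ν, Sum.inl k⟩)
          + ∑ k, phiF u τ ⟨μ, Sum.inr j⟩ ⟨ν, Sum.inr k⟩) := by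
        simp only [ccF, ddF, Finset.sum_add_distrib]
    _ = ∑ j : Fin (M μ), ∑ ν, ((∑ k, phiF u τ ⟨μ, Sum.inr j⟩ ⟨ν, Sum.inl k⟩)
          + ∑ k, phiF u τ ⟨μ, Sum.inr j⟩ ⟨ν, Sum.inr k⟩) := Finset.sum_comm
    _ = ∑ j : Fin (M μ), ∑ b, phiF u τ ⟨μ, Sum.inr j⟩ b :=
        Finset.sum_congr rfl fun j _ => (caseII_sum_idx (phiF u τ ⟨μ, Sum.inr j⟩)).symm
    _ = ∑ _j : Fin (M μ), (1 : ℂ) :=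
        Finset.sum_congr rfl fun j _ => rowEq u τ h1 _
    _ = (M μ : ℂ) := by simp

lemma aaF_comm (μ ν : Fin r) : aaF u τ μ ν
    = ∑ k : Fin (M ν), ∑ j : Fin (M μ), phiF u τ ⟨μ, Sum.inl j⟩ ⟨ν, Sum.inl k⟩ := by
  rw [aaF]; exact Finset.sum_comm

lemma bbF_comm (μ ν : Fin r) : bbF u τ μ ν
    = ∑ k : Fin (M ν), ∑ j : Fin (M μ), phiF u τ ⟨μ, Sum.inl j⟩ ⟨ν, Sum.inr k⟩ := by
  rw [bbF]; exact Finset.sum_comm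

lemma ccF_comm (μ ν : Fin r) : ccF u τ μ ν
    = ∑ k : Fin (M ν), ∑ j : Fin (M μ), phiF u τ ⟨μ, Sum.inr j⟩ ⟨ν, Sum.inl k⟩ := by
  rw [ccF]; exact Finset.sum_comm

lemma ddF_comm (μ ν : Fin r) : ddF u τ μ ν
    = ∑ k : Fin (M ν), ∑ j : Fin (M μ), phiF u τ ⟨μ, Sum.inr j⟩ ⟨ν, Sum.inr k⟩ := by
  rw [ddF]; exact Finset.sum_comm

lemma col1 (h2 : u.conjTranspose * u = 1) (ν : Fin r) :
    ∑ μ, (aaF u τ μ ν + ccF u τ μ ν) = (M ν : ℂ) := by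
  calc ∑ μ, (aaF u τ μ ν + ccF u τ μ ν)
      = ∑ μ, ∑ k : Fin (M ν), ((∑ j, phiF u τ ⟨μ, Sum.inl j⟩ ⟨ν, Sum.inl k⟩)
          + ∑ j, phiF u τ ⟨μ, Sum.inr j⟩ ⟨ν, Sum.inl k⟩) := by
        simp only [aaF_comm, ccF_comm, Finset.sum_add_distrib]
    _ = ∑ k : Fin (M ν), ∑ μ, ((∑ j, phiF u τ ⟨μ, Sum.inl j⟩ ⟨ν, Sum.inl k⟩)
          + ∑ j, phiF u τ ⟨μ, Sum.inr j⟩ ⟨ν, Sum.inl k⟩) := Finset.sum_comm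
    _ = ∑ k : Fin (M ν), ∑ a, phiF u τ a ⟨ν, Sum.inl k⟩ :=
        Finset.sum_congr rfl fun k _ => (caseII_sum_idx (fun a => phiF u τ a ⟨ν, Sum.inl k⟩)).symm
    _ = ∑ _k : Fin (M ν), (1 : ℂ) :=
        Finset.sum_congr rfl fun k _ => colEq u τ h2 _
    _ = (M ν : ℂ) := by simp

lemma col2 (h2 : u.conjTranspose * u = 1) (ν : Fin r) :
    ∑ μ, (bbF u τ μ ν + ddF u τ μ ν) = (M ν : ℂ) := by
  calc ∑ μ, (bbF u τ μ ν + ddF u τ μ ν)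
      = ∑ μ, ∑ k : Fin (M ν), ((∑ j, phiF u τ ⟨μ, Sum.inl j⟩ ⟨ν, Sum.inr k⟩)
          + ∑ j, phiF u τ ⟨μ, Sum.inr j⟩ ⟨ν, Sum.inr k⟩) := by
        simp only [bbF_comm, ddF_comm, Finset.sum_add_distrib]
    _ = ∑ k : Fin (M ν), ∑ μ, ((∑ j, phiF u τ ⟨μ, Sum.inl j⟩ ⟨ν, Sum.inr k⟩)
          + ∑ j, phiF u τ ⟨μ, Sum.inr j⟩ ⟨ν, Sum.inr k⟩) := Finset.sum_comm
    _ = ∑ k : Fin (M ν), ∑ a, phiF u τ a ⟨ν, Sum.inr k⟩ :=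
        Finset.sum_congr rfl fun k _ => (caseII_sum_idx (fun a => phiF u τ a ⟨ν, Sum.inr k⟩)).symm
    _ = ∑ _k : Fin (M ν), (1 : ℂ) :=
        Finset.sum_congr rfl fun k _ => colEq u τ h2 _
    _ = (M ν : ℂ) := by simp


lemma entryA (hq0 : ∀ ν, 0 < q ν)
    (h3 : u * (FCaseII r q M).map (algebraMap ℂ A)
        = (FCaseII r q M).map (algebraMap ℂ A) * u.map star)
    (μ ν : Fin r) (j : Fin (M μ)) (k : Fin (M ν)) :
    star (u ⟨μ, Sum.inl j⟩ ⟨ν, Sum.inl k⟩)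
      = ((q μ / q ν : ℝ) : ℂ) • u ⟨μ, Sum.inr j⟩ ⟨ν, Sum.inr k⟩ := by
  have e := congrFun (congrFun h3 ⟨μ, Sum.inr j⟩) ⟨ν, Sum.inl k⟩
  rw [caseII_mulF_inl, caseII_Fmul_inr, ← Algebra.commutes, ← Algebra.smul_def,
    ← Algebra.smul_def, Matrix.map_apply] at e
  have hμC : ((q μ : ℝ) : ℂ) ≠ 0 := Complex.ofReal_ne_zero.2 (hq0 μ).ne'
  have hνC : ((q ν : ℝ) : ℂ) ≠ 0 := Complex.ofReal_ne_zero.2 (hq0 ν).ne'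
  calc star (u ⟨μ, Sum.inl j⟩ ⟨ν, Sum.inl k⟩)
      = (((-(q μ) : ℝ) : ℂ) * ((-(q μ)⁻¹ : ℝ) : ℂ)) • star (u ⟨μ, Sum.inl j⟩ ⟨ν, Sum.inl k⟩) := by
        rw [show (((-(q μ) : ℝ) : ℂ) * ((-(q μ)⁻¹ : ℝ) : ℂ)) = 1 from by push_cast; field_simp,
          one_smul]
    _ = ((-(q μ) : ℝ) : ℂ) • (((-(q μ)⁻¹ : ℝ) : ℂ) • star (u ⟨μ, Sum.inl j⟩ ⟨ν, Sum.inl k⟩)) := by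
        rw [mul_smul]
    _ = ((-(q μ) : ℝ) : ℂ) • (((-(q ν)⁻¹ : ℝ) : ℂ) • u ⟨μ, Sum.inr j⟩ ⟨ν, Sum.inr k⟩) := by
        rw [← e]
    _ = ((q μ / q ν : ℝ) : ℂ) • u ⟨μ, Sum.inr j⟩ ⟨ν, Sum.inr k⟩ := by
        rw [smul_smul]
        congr 1
        push_cast
        field_simp

lemma entryB (hq0 : ∀ ν, 0 < q ν)
    (h3 : u * (FCaseII r q M).map (algebraMap ℂ A)
        = (FCaseII r q M).map (algebraMap ℂ A) * u.map star)
    (μ ν : Fin r) (j : Fin (M μ)) (k : Fin (M ν)) :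
    star (u ⟨μ, Sum.inl j⟩ ⟨ν, Sum.inr k⟩)
      = ((-(q μ * q ν) : ℝ) : ℂ) • u ⟨μ, Sum.inr j⟩ ⟨ν, Sum.inl k⟩ := by
  have e := congrFun (congrFun h3 ⟨μ, Sum.inr j⟩) ⟨ν, Sum.inr k⟩
  rw [caseII_mulF_inr, caseII_Fmul_inr, ← Algebra.commutes, ← Algebra.smul_def,
    ← Algebra.smul_def, Matrix.map_apply] at e
  have hμC : ((q μ : ℝ) : ℂ) ≠ 0 := Complex.ofReal_ne_zero.2 (hq0 μ).ne'
  calc star (u ⟨μ, Sum.inl j⟩ ⟨ν, Sum.inr k⟩)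
      = (((-(q μ) : ℝ) : ℂ) * ((-(q μ)⁻¹ : ℝ) : ℂ)) • star (u ⟨μ, Sum.inl j⟩ ⟨ν, Sum.inr k⟩) := by
        rw [show (((-(q μ) : ℝ) : ℂ) * ((-(q μ)⁻¹ : ℝ) : ℂ)) = 1 from by push_cast; field_simp,
          one_smul]
    _ = ((-(q μ) : ℝ) : ℂ) • (((-(q μ)⁻¹ : ℝ) : ℂ) • star (u ⟨μ, Sum.inl j⟩ ⟨ν, Sum.inr k⟩)) := by
        rw [mul_smul]
    _ = ((-(q μ) : ℝ) : ℂ) • (((q ν : ℝ) : ℂ) • u ⟨μ, Sum.inr j⟩ ⟨ν, Sum.inl k⟩) := by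
        rw [← e]
    _ = ((-(q μ * q ν) : ℝ) : ℂ) • u ⟨μ, Sum.inr j⟩ ⟨ν, Sum.inl k⟩ := by
        rw [smul_smul]
        congr 1
        push_cast
        ring

lemma blockA (hq0 : ∀ ν, 0 < q ν)
    (h3 : u * (FCaseII r q M).map (algebraMap ℂ A)
        = (FCaseII r q M).map (algebraMap ℂ A) * u.map star)
    (μ ν : Fin r) :
    aaF u τ μ ν = ((q μ / q ν : ℝ) : ℂ)^2 * ddF u τ μ ν := by
  rw [aaF, ddF, Finset.mul_sum]
  refine Finset.sum_congr rfl fun j _ => ?_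
  rw [Finset.mul_sum]
  refine Finset.sum_congr rfl fun k _ => ?_
  exact tau_star_sq τ _ _ _ (entryA u hq0 h3 μ ν j k)

lemma blockB (hq0 : ∀ ν, 0 < q ν)
    (h3 : u * (FCaseII r q M).map (algebraMap ℂ A)
        = (FCaseII r q M).map (algebraMap ℂ A) * u.map star)
    (μ ν : Fin r) :
    bbF u τ μ ν = ((q μ * q ν : ℝ) : ℂ)^2 * ccF u τ μ ν := by
  rw [bbF, ccF, Finset.mul_sum]
  refine Finset.sum_congr rfl fun j _ => ?_
  rw [Finset.mul_sum]
  refine Finset.sum_congr rfl fun k _ => ?_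
  have := tau_star_sq τ _ _ _ (entryB u hq0 h3 μ ν j k)
  rw [phiF, phiF, this]
  congr 1
  push_cast
  ring


lemma masterAA (hq0 : ∀ ν, 0 < q ν) (hmono : StrictMono q) (hq1 : ∀ ν, q ν ≤ 1)
    (h1 : u * u.conjTranspose = 1) (h2 : u.conjTranspose * u = 1)
    (h3 : u * (FCaseII r q M).map (algebraMap ℂ A)
        = (FCaseII r q M).map (algebraMap ℂ A) * u.map star)
    (μ ν : Fin r) (hne : μ ≠ ν) : aaF u τ μ ν = 0 := by
  -- Step A : bbF = ccF everywhere
  have hbc : ∀ μ ν : Fin r, bbF u τ μ ν = ccF u τ μ ν := by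
    have t1 : ∑ μ, ∑ ν, (aaF u τ μ ν + bbF u τ μ ν) = ∑ μ : Fin r, (M μ : ℂ) :=
      Finset.sum_congr rfl fun μ _ => row1 u τ h1 μ
    have t2 : ∑ ν, ∑ μ, (aaF u τ μ ν + ccF u τ μ ν) = ∑ ν : Fin r, (M ν : ℂ) :=
      Finset.sum_congr rfl fun ν _ => col1 u τ h2 ν
    have t2' : ∑ μ, ∑ ν, (aaF u τ μ ν + ccF u τ μ ν) = ∑ ν : Fin r, (M ν : ℂ) := by
      rw [← t2]; exact Finset.sum_comm
    have hzero : ∑ μ, ∑ ν, (ccF u τ μ ν - bbF u τ μ ν) = 0 := by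
      have e1 : ∑ μ, (∑ ν, aaF u τ μ ν + ∑ ν, bbF u τ μ ν) = ∑ μ : Fin r, (M μ : ℂ) := by
        rw [← t1]; exact Finset.sum_congr rfl fun μ _ => Finset.sum_add_distrib.symm
      have e2 : ∑ μ, (∑ ν, aaF u τ μ ν + ∑ ν, ccF u τ μ ν) = ∑ ν : Fin r, (M ν : ℂ) := by
        rw [← t2']; exact Finset.sum_congr rfl fun μ _ => Finset.sum_add_distrib.symm
      have e1' : ∑ μ, ∑ ν, aaF u τ μ ν + ∑ μ, ∑ ν, bbF u τ μ ν = ∑ μ : Fin r, (M μ : ℂ) := by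
        rw [← Finset.sum_add_distrib]; exact e1
      have e2' : ∑ μ, ∑ ν, aaF u τ μ ν + ∑ μ, ∑ ν, ccF u τ μ ν = ∑ ν : Fin r, (M ν : ℂ) := by
        rw [← Finset.sum_add_distrib]; exact e2
      have e3 : ∑ μ, ∑ ν, ccF u τ μ ν - ∑ μ, ∑ ν, bbF u τ μ ν = 0 := by
        linear_combination e2' - e1'
      calc ∑ μ, ∑ ν, (ccF u τ μ ν - bbF u τ μ ν)
          = ∑ μ, (∑ ν, ccF u τ μ ν - ∑ ν, bbF u τ μ ν) :=
            Finset.sum_congr rfl fun μ _ => Finset.sum_sub_distrib _ _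
        _ = ∑ μ, ∑ ν, ccF u τ μ ν - ∑ μ, ∑ ν, bbF u τ μ ν := Finset.sum_sub_distrib _ _
        _ = 0 := e3
    have hterm : ∀ μ ν : Fin r, ccF u τ μ ν - bbF u τ μ ν
        = ((1 - (q μ * q ν)^2 : ℝ) : ℂ) * ccF u τ μ ν := by
      intro μ ν
      rw [blockB u τ hq0 h3]
      push_cast
      ring
    have hnn : ∀ p ∈ (Finset.univ : Finset (Fin r × Fin r)),
        0 ≤ ((1 - (q p.1 * q p.2)^2 : ℝ) : ℂ) * ccF u τ p.1 p.2 := by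
      intro p _
      refine mul_nonneg (Complex.zero_le_real.2 ?_) (ccF_nonneg u τ _ _)
      have h1' := hq1 p.1
      have h2' := hq1 p.2
      have h3' := hq0 p.1
      have h4' := hq0 p.2
      have h5' : q p.1 * q p.2 ≤ 1 := by nlinarith
      have h6' : 0 < q p.1 * q p.2 := mul_pos h3' h4'
      nlinarith [h5', h6']
    have hflat : ∑ p : Fin r × Fin r, ((1 - (q p.1 * q p.2)^2 : ℝ) : ℂ) * ccF u τ p.1 p.2 = 0 := by
      rw [Fintype.sum_prod_type]
      calc ∑ μ, ∑ ν, ((1 - (q μ * q ν)^2 : ℝ) : ℂ) * ccF u τ μ ν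
          = ∑ μ, ∑ ν, (ccF u τ μ ν - bbF u τ μ ν) :=
            Finset.sum_congr rfl fun μ _ => Finset.sum_congr rfl fun ν _ => (hterm μ ν).symm
        _ = 0 := hzero
    intro μ ν
    have := (Finset.sum_eq_zero_iff_of_nonneg hnn).1 hflat (μ, ν) (Finset.mem_univ _)
    have h4 := hterm μ ν
    rw [this] at h4
    linear_combination -h4
  -- dd in terms of aa
  have hD : ∀ μ ν : Fin r, ddF u τ μ ν = ((q ν / q μ : ℝ) : ℂ)^2 * aaF u τ μ ν := by
    intro μ ν
    have hA := blockA u τ hq0 h3 μ ν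
    have hcc : (((q ν / q μ : ℝ) : ℂ))^2 * (((q μ / q ν : ℝ) : ℂ))^2 = 1 := by
      have hμ : (q μ : ℝ) ≠ 0 := (hq0 μ).ne'
      have hν : (q ν : ℝ) ≠ 0 := (hq0 ν).ne'
      push_cast
      field_simp
    rw [hA, ← mul_assoc, hcc, one_mul]
  have hterm2 : ∀ μ ν : Fin r, aaF u τ μ ν - ddF u τ μ ν
      = ((1 - (q ν / q μ)^2 : ℝ) : ℂ) * aaF u τ μ ν := by
    intro μ ν
    rw [hD]
    push_cast
    ring
  -- Row⋆ and Col⋆ identities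
  have hRowStar : ∀ μ : Fin r,
      ∑ ν, ((1 - (q ν / q μ)^2 : ℝ) : ℂ) * aaF u τ μ ν = 0 := by
    intro μ
    have hr1 : ∑ ν, (aaF u τ μ ν + ccF u τ μ ν) = (M μ : ℂ) := by
      rw [← row1 u τ h1 μ]
      exact Finset.sum_congr rfl fun ν _ => by rw [hbc]
    have hr2 := row2 u τ h1 μ
    have e1 : ∑ ν, aaF u τ μ ν + ∑ ν, ccF u τ μ ν = (M μ : ℂ) := by
      rw [← Finset.sum_add_distrib]; exact hr1
    have e2 : ∑ ν, ccF u τ μ ν + ∑ ν, ddF u τ μ ν = (M μ : ℂ) := by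
      rw [← Finset.sum_add_distrib]; exact hr2
    calc ∑ ν, ((1 - (q ν / q μ)^2 : ℝ) : ℂ) * aaF u τ μ ν
        = ∑ ν, (aaF u τ μ ν - ddF u τ μ ν) :=
          Finset.sum_congr rfl fun ν _ => (hterm2 μ ν).symm
      _ = ∑ ν, aaF u τ μ ν - ∑ ν, ddF u τ μ ν := Finset.sum_sub_distrib _ _
      _ = 0 := by linear_combination e1 - e2
  have hColStar : ∀ ν : Fin r,
      ∑ μ, ((1 - (q ν / q μ)^2 : ℝ) : ℂ) * aaF u τ μ ν = 0 := by
    intro ν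
    have hr1 := col1 u τ h2 ν
    have hc2 : ∑ μ, (ccF u τ μ ν + ddF u τ μ ν) = (M ν : ℂ) := by
      rw [← col2 u τ h2 ν]
      exact Finset.sum_congr rfl fun μ _ => by rw [hbc]
    have e1 : ∑ μ, aaF u τ μ ν + ∑ μ, ccF u τ μ ν = (M ν : ℂ) := by
      rw [← Finset.sum_add_distrib]; exact hr1
    have e2 : ∑ μ, ccF u τ μ ν + ∑ μ, ddF u τ μ ν = (M ν : ℂ) := by
      rw [← Finset.sum_add_distrib]; exact hc2
    calc ∑ μ, ((1 - (q ν / q μ)^2 : ℝ) : ℂ) * aaF u τ μ ν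
        = ∑ μ, (aaF u τ μ ν - ddF u τ μ ν) :=
          Finset.sum_congr rfl fun μ _ => (hterm2 μ ν).symm
      _ = ∑ μ, aaF u τ μ ν - ∑ μ, ddF u τ μ ν := Finset.sum_sub_distrib _ _
      _ = 0 := by linear_combination e1 - e2
  -- main induction on min μ ν
  have main : ∀ n : ℕ, ∀ μ ν : Fin r, μ ≠ ν → min (μ : ℕ) (ν : ℕ) = n → aaF u τ μ ν = 0 := by
    intro n
    induction n using Nat.strong_induction_on with
    | _ n ih =>
      intro μ ν hne hmin
      have hvne : (μ : ℕ) ≠ (ν : ℕ) := fun h => hne (Fin.ext h)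
      rcases hvne.lt_or_gt with hlt | hlt
      · -- μ < ν : use the row equation at μ; all terms nonpositive
        have hnn : ∀ ν' ∈ (Finset.univ : Finset (Fin r)),
            0 ≤ -(((1 - (q ν' / q μ)^2 : ℝ) : ℂ) * aaF u τ μ ν') := by
          intro ν' _
          rcases lt_trichotomy (ν' : ℕ) (μ : ℕ) with h | h | h
          · have hz : aaF u τ μ ν' = 0 :=
              ih (ν' : ℕ) (by omega) μ ν' (fun hh => by
                have := congrArg Fin.val hh; omega) (by omega)
            simp [hz]
          · have hee : ν' = μ := Fin.ext h
            subst hee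
            simp [div_self (hq0 ν').ne']
          · have hq : q μ < q ν' := hmono (show μ < ν' from h)
            rw [show -(((1 - (q ν' / q μ)^2 : ℝ) : ℂ) * aaF u τ μ ν')
                = (((q ν' / q μ)^2 - 1 : ℝ) : ℂ) * aaF u τ μ ν' from by push_cast; ring]
            refine mul_nonneg (Complex.zero_le_real.2 ?_) (aaF_nonneg u τ _ _)
            have h1' := hq0 μ
            have : (1 : ℝ) < q ν' / q μ := (one_lt_div h1').2 hq
            nlinarith
        have hsz : ∑ ν', -(((1 - (q ν' / q μ)^2 : ℝ) : ℂ) * aaF u τ μ ν') = 0 := by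
          rw [Finset.sum_neg_distrib, hRowStar μ, neg_zero]
        have hterm0 := (Finset.sum_eq_zero_iff_of_nonneg hnn).1 hsz ν (Finset.mem_univ _)
        have hcne : ((1 - (q ν / q μ)^2 : ℝ) : ℂ) ≠ 0 := by
          rw [Complex.ofReal_ne_zero]
          have hq : q μ < q ν := hmono (show μ < ν from hlt)
          have h1' := hq0 μ
          have : (1 : ℝ) < q ν / q μ := (one_lt_div h1').2 hq
          nlinarith
        have := neg_eq_zero.1 hterm0
        rcases mul_eq_zero.1 this with h | h
        · exact absurd h hcne
        · exact h
      · -- ν < μ : use the column equation at ν; all terms nonnegative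
        have hnn : ∀ μ' ∈ (Finset.univ : Finset (Fin r)),
            0 ≤ ((1 - (q ν / q μ')^2 : ℝ) : ℂ) * aaF u τ μ' ν := by
          intro μ' _
          rcases lt_trichotomy (μ' : ℕ) (ν : ℕ) with h | h | h
          · have hz : aaF u τ μ' ν = 0 :=
              ih (μ' : ℕ) (by omega) μ' ν (fun hh => by
                have := congrArg Fin.val hh; omega) (by omega)
            simp [hz]
          · have hee : μ' = ν := Fin.ext h
            subst hee
            simp [div_self (hq0 μ').ne']
          · have hq : q ν < q μ' := hmono (show ν < μ' from h)
            refine mul_nonneg (Complex.zero_le_real.2 ?_) (aaF_nonneg u τ _ _)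
            have h1' := hq0 μ'
            have h2' := hq0 ν
            have : q ν / q μ' < 1 := (div_lt_one h1').2 hq
            have hpos : 0 < q ν / q μ' := div_pos h2' h1'
            nlinarith
        have hterm0 := (Finset.sum_eq_zero_iff_of_nonneg hnn).1 (hColStar ν) μ (Finset.mem_univ _)
        have hcne : ((1 - (q ν / q μ)^2 : ℝ) : ℂ) ≠ 0 := by
          rw [Complex.ofReal_ne_zero]
          have hq : q ν < q μ := hmono (show ν < μ from hlt)
          have h1' := hq0 μ
          have h2' := hq0 ν
          have : q ν / q μ < 1 := (div_lt_one h1').2 hq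
          have hpos : 0 < q ν / q μ := div_pos h2' h1'
          nlinarith
        rcases mul_eq_zero.1 hterm0 with h | h
        · exact absurd h hcne
        · exact h
  exact main (min (μ : ℕ) (ν : ℕ)) μ ν hne rfl

end Main

/-- in the Case II setting, every tracial state `τ` on `Pol(O_F⁺)` satisfies
`τ(Tr(A_{μν}^* A_{μν})) = 0` for all `μ ≠ ν`; in particular all entries of the off-diagonal
blocks `A_{μν}` (`μ ≠ ν`) lie in the Kac ideal. -/
theorem caseII_offdiag_A_blocks_in_kac (r : ℕ) (hr : 1 ≤ r) (q : Fin r → ℝ)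
    (hq0 : ∀ ν, 0 < q ν) (hmono : StrictMono q) (hqlast : q ⟨r - 1, by omega⟩ = 1)
    (M : Fin r → ℕ) (hM : ∀ ν : Fin r, (ν : ℕ) < r - 1 → 1 ≤ M ν)
    (P : PolO (FCaseII r q M)) :
    (∀ (τ : TracialState P.carrier) (μ ν : Fin r), μ ≠ ν →
        τ.toFun (∑ k : Fin (M ν), ∑ j : Fin (M μ),
          star (P.u ⟨μ, .inl j⟩ ⟨ν, .inl k⟩) * P.u ⟨μ, .inl j⟩ ⟨ν, .inl k⟩) = 0) ∧
      ∀ μ ν : Fin r, μ ≠ ν → ∀ (j : Fin (M μ)) (k : Fin (M ν)),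
        P.u ⟨μ, .inl j⟩ ⟨ν, .inl k⟩ ∈ kacIdeal P.carrier := by
  obtain ⟨h1, h2, h3⟩ := P.rel
  have hq1 : ∀ ν : Fin r, q ν ≤ 1 := by
    intro ν
    have hle : ν ≤ (⟨r - 1, by omega⟩ : Fin r) := by
      rw [Fin.le_def]
      have := ν.2
      simp only []
      omega
    calc q ν ≤ q ⟨r - 1, by omega⟩ := hmono.monotone hle
      _ = 1 := hqlast
  have master : ∀ (τ : TracialState P.carrier) (μ ν : Fin r), μ ≠ ν → aaF P.u τ μ ν = 0 :=
    fun τ μ ν hne => masterAA P.u τ hq0 hmono hq1 h1 h2 h3 μ ν hne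
  constructor
  · intro τ μ ν hne
    calc τ.toFun (∑ k : Fin (M ν), ∑ j : Fin (M μ),
          star (P.u ⟨μ, .inl j⟩ ⟨ν, .inl k⟩) * P.u ⟨μ, .inl j⟩ ⟨ν, .inl k⟩)
        = ∑ k : Fin (M ν), ∑ j : Fin (M μ), phiF P.u τ ⟨μ, .inl j⟩ ⟨ν, .inl k⟩ := by
          rw [map_sum]
          exact Finset.sum_congr rfl fun k _ => map_sum _ _ _
      _ = aaF P.u τ μ ν := (aaF_comm P.u τ μ ν).symm
      _ = 0 := master τ μ ν hne
  · intro μ ν hne j k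
    intro τ
    have hm := master τ μ ν hne
    have hnn1 : ∀ j' ∈ (Finset.univ : Finset (Fin (M μ))),
        0 ≤ ∑ k' : Fin (M ν), phiF P.u τ ⟨μ, Sum.inl j'⟩ ⟨ν, Sum.inl k'⟩ :=
      fun j' _ => Finset.sum_nonneg fun k' _ => phiF_nonneg P.u τ _ _
    have h4 := (Finset.sum_eq_zero_iff_of_nonneg hnn1).1 hm j (Finset.mem_univ _)
    have h5 := (Finset.sum_eq_zero_iff_of_nonneg
      (fun k' _ => phiF_nonneg P.u τ ⟨μ, Sum.inl j⟩ ⟨ν, Sum.inl k'⟩)).1 h4 k (Finset.mem_univ _)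
    exact h5
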